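/- If a 2-threshold graph G has two connected components C1 and C2 each containing at least two vertices, then one of the subgraphs induced by C1 and C2 is a threshold graph and the other is a special 2-threshold graph. -/

import Mathlib

/-- `G` is a threshold graph: every nonempty induced subgraph (given by a nonempty vertex
subset `W`) has a vertex that is isolated in it or universal in it. -/
def IsThreshold {V : Type*} (G : SimpleGraph V) : Prop :=
  ∀ W : Set V, W.Nonempty → ∃ x ∈ W,
    (∀ y ∈ W, ¬ G.Adj x y) ∨ (∀ y ∈ W, y ≠ x → G.Adj x y)

/-- `G` is a 2-threshold graph: there is a black-and-white coloring (white = `true`) such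
that every nonempty vertex subset `W` contains a vertex `x` which is isolated in `W`, or
whose neighbors inside `W` are exactly the white vertices of `W \ {x}`, or exactly the
black vertices of `W \ {x}`. -/
def Is2Threshold {V : Type*} (G : SimpleGraph V) : Prop :=
  ∃ c : V → Bool, ∀ W : Set V, W.Nonempty → ∃ x ∈ W,
    (∀ y ∈ W, ¬ G.Adj x y) ∨
    (∀ y ∈ W, y ≠ x → (G.Adj x y ↔ c y = true)) ∨
    (∀ y ∈ W, y ≠ x → (G.Adj x y ↔ c y = false))

/-- `G` is a special 2-threshold graph: there is a black-and-white coloring `c`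
(white = `true`) and a linear ordering of the vertices (given by `e : Fin n ≃ V`) such
that every vertex is either nonadjacent to all earlier vertices, or adjacent to exactly
the white earlier vertices. -/
def IsSpecial2Threshold {V : Type*} (G : SimpleGraph V) : Prop :=
  ∃ (n : ℕ) (e : Fin n ≃ V) (c : V → Bool), ∀ i : Fin n,
    (∀ j : Fin n, j < i → ¬ G.Adj (e i) (e j)) ∨
    (∀ j : Fin n, j < i → (G.Adj (e i) (e j) ↔ c (e j) = true))

/-- The defining property of a 2-threshold graph, for a fixed coloring `c`. -/
def TTProp {V : Type*} (G : SimpleGraph V) (c : V → Bool) : Prop :=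
  ∀ W : Set V, W.Nonempty → ∃ x ∈ W,
    (∀ y ∈ W, ¬ G.Adj x y) ∨
    (∀ y ∈ W, y ≠ x → (G.Adj x y ↔ c y = true)) ∨
    (∀ y ∈ W, y ≠ x → (G.Adj x y ↔ c y = false))

/-- Vertices in distinct connected components are distinct and nonadjacent. -/
lemma aux_cross {V : Type*} {G : SimpleGraph V} {C₁ C₂ : G.ConnectedComponent}
    (hne : C₁ ≠ C₂) {x y : V} (hx : x ∈ C₁.supp) (hy : y ∈ C₂.supp) :
    ¬ G.Adj x y ∧ x ≠ y := by
  rw [SimpleGraph.ConnectedComponent.mem_supp_iff] at hx hy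
  constructor
  · intro ha
    exact hne (by rw [← hx, ← hy]; exact SimpleGraph.ConnectedComponent.sound ha.reachable)
  · rintro rfl
    exact hne (hx.symm.trans hy)

/-- A nontrivial component contains an edge. -/
lemma aux_edge {V : Type*} {G : SimpleGraph V} {C : G.ConnectedComponent}
    (h : C.supp.Nontrivial) : ∃ u v, u ∈ C.supp ∧ v ∈ C.supp ∧ G.Adj u v := by
  obtain ⟨x, hx, y, hy, hxy⟩ := h
  rw [SimpleGraph.ConnectedComponent.mem_supp_iff] at hx hy
  have hr : G.Reachable x y := SimpleGraph.ConnectedComponent.exact (hx.trans hy.symm)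
  obtain ⟨w⟩ := hr
  cases w with
  | nil => exact absurd rfl hxy
  | @cons _ b _ ha p =>
    refine ⟨x, b, ?_, ?_, ha⟩
    · rw [SimpleGraph.ConnectedComponent.mem_supp_iff]; exact hx
    · rw [SimpleGraph.ConnectedComponent.mem_supp_iff, ← hx]
      exact (SimpleGraph.ConnectedComponent.sound ha.reachable).symm

/-- If no edge inside a component is bichromatic, the component is monochromatic. -/
lemma aux_mono {V : Type*} {G : SimpleGraph V} {c : V → Bool} {C : G.ConnectedComponent}
    (h : ∀ x ∈ C.supp, ∀ y, G.Adj x y → c x = c y) :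
    ∀ x ∈ C.supp, ∀ y ∈ C.supp, c x = c y := by
  have key : ∀ (x y : V), G.Reachable x y → x ∈ C.supp → c x = c y := by
    intro x y hr
    obtain ⟨w⟩ := hr
    induction w with
    | nil => intro _; rfl
    | @cons u b _ ha p ih =>
      intro hx
      have hb : b ∈ C.supp := by
        rw [SimpleGraph.ConnectedComponent.mem_supp_iff]
        rw [SimpleGraph.ConnectedComponent.mem_supp_iff] at hx
        rw [← hx]
        exact (SimpleGraph.ConnectedComponent.sound ha.reachable).symm
      exact (h _ hx _ ha).trans (ih hb)
  intro x hx y hy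
  refine key x y ?_ hx
  rw [SimpleGraph.ConnectedComponent.mem_supp_iff] at hx hy
  exact SimpleGraph.ConnectedComponent.exact (hx.trans hy.symm)

/-- Helper: a vertex with a neighbor and two nonneighbors of distinct colors in `W`
cannot be a 2-threshold witness for `W`. -/
lemma aux_quad {V : Type*} {G : SimpleGraph V} {c : V → Bool} {W : Set V} {x p q r : V}
    (hp : G.Adj x p) (hq : ¬ G.Adj x q) (hr : ¬ G.Adj x r) (hqr : c q ≠ c r)
    (hqx : q ≠ x) (hrx : r ≠ x) (hpW : p ∈ W) (hqW : q ∈ W) (hrW : r ∈ W)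
    (hyp : (∀ y ∈ W, ¬ G.Adj x y) ∨
      (∀ y ∈ W, y ≠ x → (G.Adj x y ↔ c y = true)) ∨
      (∀ y ∈ W, y ≠ x → (G.Adj x y ↔ c y = false))) : False := by
  rcases hyp with h1 | h2 | h3
  · exact h1 p hpW hp
  · have e1 : ¬ (c q = true) := fun hcq => hq ((h2 q hqW hqx).mpr hcq)
    have e2 : ¬ (c r = true) := fun hcr => hr ((h2 r hrW hrx).mpr hcr)
    rw [Bool.not_eq_true] at e1 e2
    exact hqr (e1.trans e2.symm)
  · have e1 : ¬ (c q = false) := fun hcq => hq ((h3 q hqW hqx).mpr hcq)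
    have e2 : ¬ (c r = false) := fun hcr => hr ((h3 r hrW hrx).mpr hcr)
    rw [Bool.not_eq_false] at e1 e2
    exact hqr (e1.trans e2.symm)

/-- Two distinct components cannot both contain a bichromatic edge. -/
lemma aux_no_two_bi {V : Type*} {G : SimpleGraph V} {c : V → Bool} (hc : TTProp G c)
    {C₁ C₂ : G.ConnectedComponent} (hne : C₁ ≠ C₂) {a b a' b' : V}
    (ha : a ∈ C₁.supp) (hb : b ∈ C₁.supp) (ha' : a' ∈ C₂.supp) (hb' : b' ∈ C₂.supp)
    (hab : G.Adj a b) (hab' : G.Adj a' b') (hcol : c a ≠ c b) (hcol' : c a' ≠ c b') :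
    False := by
  obtain ⟨naa', daa'⟩ := aux_cross hne ha ha'
  obtain ⟨nab', dab'⟩ := aux_cross hne ha hb'
  obtain ⟨nba', dba'⟩ := aux_cross hne hb ha'
  obtain ⟨nbb', dbb'⟩ := aux_cross hne hb hb'
  set W : Set V := {a, b, a', b'} with hW
  have haW : a ∈ W := by simp [hW]
  have hbW : b ∈ W := by simp [hW]
  have ha'W : a' ∈ W := by simp [hW]
  have hb'W : b' ∈ W := by simp [hW]
  obtain ⟨x, hxW, hyp⟩ := hc W ⟨a, haW⟩
  have hx4 : x = a ∨ x = b ∨ x = a' ∨ x = b' := by simpa [hW] using hxW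
  rcases hx4 with rfl | rfl | rfl | rfl
  · exact aux_quad hab naa' nab' hcol' daa'.symm dab'.symm hbW ha'W hb'W hyp
  · exact aux_quad hab.symm nba' nbb' hcol' dba'.symm dbb'.symm haW ha'W hb'W hyp
  · exact aux_quad hab' (fun h => naa' h.symm) (fun h => nba' h.symm) hcol
      daa' dba' hb'W haW hbW hyp
  · exact aux_quad hab'.symm (fun h => nab' h.symm) (fun h => nbb' h.symm) hcol
      dab' dbb' ha'W haW hbW hyp

/-- Building a special 2-threshold ordering from the "every subset has a vertex which is
isolated or adjacent exactly to the white vertices" property. -/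
lemma aux_buildSpecial {U : Type*} [Fintype U] (H : SimpleGraph U) (c' : U → Bool)
    (P : ∀ W : Set U, W.Nonempty → ∃ x ∈ W,
      (∀ y ∈ W, ¬ H.Adj x y) ∨ (∀ y ∈ W, y ≠ x → (H.Adj x y ↔ c' y = true))) :
    IsSpecial2Threshold H := by
  classical
  have key : ∀ s : Finset U, ∃ l : List U, l.Nodup ∧ (∀ a, a ∈ l ↔ a ∈ s) ∧
      ∀ (i : ℕ) (hi : i < l.length),
        (∀ y ∈ l.take i, ¬ H.Adj l[i] y) ∨
        (∀ y ∈ l.take i, y ≠ l[i] → (H.Adj l[i] y ↔ c' y = true)) := by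
    intro s
    induction s using Finset.strongInduction with
    | _ s ih =>
      rcases s.eq_empty_or_nonempty with rfl | hs
      · exact ⟨[], by simp, by simp, by intro i hi; simp at hi⟩
      · obtain ⟨x, hx, hcond⟩ := P (↑s) (by obtain ⟨a, ha⟩ := hs; exact ⟨a, ha⟩)
        have hxs : x ∈ s := hx
        obtain ⟨l', hnd, hmem, hprop⟩ := ih (s.erase x) (Finset.erase_ssubset hxs)
        have hxl' : x ∉ l' := by
          intro hcx
          have := (hmem x).1 hcx
          simp at this
        refine ⟨l' ++ [x], ?_, ?_, ?_⟩
        · refine hnd.append (List.nodup_singleton x) ?_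
          intro a ha hb
          simp at hb
          subst hb
          exact hxl' ha
        · intro a
          by_cases hax : a = x
          · subst hax; simp [hxs]
          · simp [List.mem_append, hmem a, Finset.mem_erase, hax]
        · intro i hi
          have hi' : i < l'.length + 1 := by simpa using hi
          rcases lt_or_eq_of_le (Nat.le_of_lt_succ hi') with hlt | heq
          · have h1 : (l' ++ [x])[i] = l'[i] := List.getElem_append_left hlt
            have h2 : (l' ++ [x]).take i = l'.take i :=
              List.take_append_of_le_length (le_of_lt hlt)
            rw [h1, h2]
            exact hprop i hlt
          · have h1 : (l' ++ [x])[i] = x := List.getElem_concat_length heq hi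
            have h2 : (l' ++ [x]).take i = l' := by rw [heq]; exact List.take_left
            rw [h1, h2]
            have hyin : ∀ y ∈ l', y ∈ (↑s : Set U) ∧ y ≠ x := by
              intro y hy
              have := (hmem y).1 hy
              rw [Finset.mem_erase] at this
              exact ⟨this.2, this.1⟩
            rcases hcond with hiso | hw
            · exact Or.inl fun y hy => hiso y (hyin y hy).1
            · exact Or.inr fun y hy _ => hw y (hyin y hy).1 (hyin y hy).2
  obtain ⟨l, hnd, hmem, hprop⟩ := key Finset.univ
  have hall : ∀ a, a ∈ l := fun a => (hmem a).2 (Finset.mem_univ a)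
  refine ⟨l.length, List.Nodup.getEquivOfForallMemList l hnd hall, c', ?_⟩
  intro i
  have hmemtake : ∀ j : Fin l.length, j < i → l.get j ∈ l.take (i : ℕ) := by
    intro j hj
    have hj' : (j : ℕ) < (i : ℕ) := hj
    have hjl : (j : ℕ) < (l.take (i : ℕ)).length := by
      rw [List.length_take]
      exact lt_min hj' j.isLt
    have he : (l.take (i : ℕ))[(j : ℕ)]'hjl = l[(j : ℕ)] := List.getElem_take
    rw [List.get_eq_getElem, ← he]
    exact List.getElem_mem hjl
  have hgne : ∀ j : Fin l.length, j < i → l.get j ≠ l.get i := by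
    intro j hj hc2
    have hj' : (j : ℕ) < (i : ℕ) := hj
    rw [List.get_eq_getElem, List.get_eq_getElem] at hc2
    exact absurd ((List.Nodup.getElem_inj_iff hnd).mp hc2) (Nat.ne_of_lt hj')
  rcases hprop i i.isLt with hiso | hw
  · exact Or.inl fun j hj => hiso (l.get j) (hmemtake j hj)
  · exact Or.inr fun j hj => hw (l.get j) (hmemtake j hj) (hgne j hj)

/-- Core lemma: if `C₂` is monochromatic (and nontrivial), then `C₂` induces a threshold
graph and `C₁` induces a special 2-threshold graph. -/
lemma aux_core {V : Type*} [Fintype V] {G : SimpleGraph V} {c : V → Bool}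
    (hc : TTProp G c) {C₁ C₂ : G.ConnectedComponent} (hne : C₁ ≠ C₂)
    (h₂ : C₂.supp.Nontrivial) (hmono : ∀ x ∈ C₂.supp, ∀ y ∈ C₂.supp, c x = c y) :
    IsThreshold (G.induce C₂.supp) ∧ IsSpecial2Threshold (G.induce C₁.supp) := by
  classical
  constructor
  · -- threshold for the monochromatic component
    intro Z hZ
    obtain ⟨z0, hz0⟩ := hZ
    obtain ⟨x, hxW, hyp⟩ := hc (Subtype.val '' Z) ⟨z0, z0, hz0, rfl⟩
    obtain ⟨x0, hx0Z, rfl⟩ := hxW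
    refine ⟨x0, hx0Z, ?_⟩
    have hcy : ∀ y : C₂.supp, y ∈ Z → c ↑y = c ↑x0 := fun y _ => hmono ↑y y.2 ↑x0 x0.2
    rcases hyp with h1 | h2 | h3
    · exact Or.inl fun y hy hA => h1 ↑y ⟨y, hy, rfl⟩ hA
    · cases hκ : c ↑x0 with
      | true =>
        refine Or.inr fun y hy hyx => ?_
        refine (h2 ↑y ⟨y, hy, rfl⟩ (fun hcc => hyx (Subtype.ext hcc))).mpr ?_
        rw [hcy y hy, hκ]
      | false =>
        refine Or.inl fun y hy hA => ?_
        by_cases hyx : y = x0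
        · subst hyx; exact (G.induce C₂.supp).irrefl hA
        · have := (h2 ↑y ⟨y, hy, rfl⟩ (fun hcc => hyx (Subtype.ext hcc))).mp hA
          rw [hcy y hy, hκ] at this
          exact Bool.false_ne_true this
    · cases hκ : c ↑x0 with
      | false =>
        refine Or.inr fun y hy hyx => ?_
        refine (h3 ↑y ⟨y, hy, rfl⟩ (fun hcc => hyx (Subtype.ext hcc))).mpr ?_
        rw [hcy y hy, hκ]
      | true =>
        refine Or.inl fun y hy hA => ?_
        by_cases hyx : y = x0
        · subst hyx; exact (G.induce C₂.supp).irrefl hA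
        · have := (h3 ↑y ⟨y, hy, rfl⟩ (fun hcc => hyx (Subtype.ext hcc))).mp hA
          rw [hcy y hy, hκ] at this
          exact Bool.false_ne_true this.symm
  · -- special 2-threshold for the other component
    obtain ⟨u, v, hu, hv, huv⟩ := aux_edge h₂
    have hcv : c v = c u := hmono v hv u hu
    have monoCase : ∀ W : Set V, W.Nonempty → (∀ y ∈ W, c y = !(c u)) →
        ∃ x ∈ W, (∀ y ∈ W, ¬ G.Adj x y) ∨
          (∀ y ∈ W, y ≠ x → (G.Adj x y ↔ c y = !(c u))) := by
      intro W hW hall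
      obtain ⟨x, hxW, hyp⟩ := hc W hW
      refine ⟨x, hxW, ?_⟩
      rcases hyp with h1 | h2 | h3
      · exact Or.inl h1
      · cases hκ : c u with
        | true =>
          refine Or.inl fun y hy hA => ?_
          by_cases hyx : y = x
          · subst hyx; exact G.irrefl hA
          · have := (h2 y hy hyx).mp hA
            rw [hall y hy, hκ] at this
            simp at this
        | false =>
          refine Or.inr fun y hy hyx => ?_
          rw [h2 y hy hyx]
          simp
      · cases hκ : c u with
        | false =>
          refine Or.inl fun y hy hA => ?_
          by_cases hyx : y = x
          · subst hyx; exact G.irrefl hA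
          · have := (h3 y hy hyx).mp hA
            rw [hall y hy, hκ] at this
            simp at this
        | true =>
          refine Or.inr fun y hy hyx => ?_
          rw [h3 y hy hyx]
          simp
    have P : ∀ W : Set V, W ⊆ C₁.supp → W.Nonempty →
        ∃ x ∈ W, (∀ y ∈ W, ¬ G.Adj x y) ∨
          (∀ y ∈ W, y ≠ x → (G.Adj x y ↔ c y = !(c u))) := by
      intro W hWsub hW
      have crossWu : ∀ y ∈ W, ¬ G.Adj u y ∧ u ≠ y := fun y hy =>
        aux_cross (Ne.symm hne) hu (hWsub hy)
      have crossWv : ∀ y ∈ W, ¬ G.Adj v y ∧ v ≠ y := fun y hy =>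
        aux_cross (Ne.symm hne) hv (hWsub hy)
      set W' : Set V := insert u (insert v W) with hW'
      have huW' : u ∈ W' := by simp [hW']
      have hvW' : v ∈ W' := by simp [hW']
      have hWW' : ∀ y ∈ W, y ∈ W' := fun y hy => by simp [hW', hy]
      obtain ⟨x, hxW', hyp⟩ := hc W' ⟨u, huW'⟩
      have hx3 : x = u ∨ x = v ∨ x ∈ W := by simpa [hW'] using hxW'
      rcases hx3 with hxu | hxv | hxW
      · rw [hxu] at hyp
        rcases hyp with h1 | h2 | h3
        · exact absurd huv (h1 v hvW')
        · have hκt : c u = true := by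
            rw [← hcv]; exact (h2 v hvW' (G.ne_of_adj huv).symm).mp huv
          refine monoCase W hW fun y hy => ?_
          obtain ⟨nuy, duy⟩ := crossWu y hy
          have : c y = false := by
            cases hcy : c y with
            | false => rfl
            | true => exact absurd ((h2 y (hWW' y hy) duy.symm).mpr hcy) nuy
          rw [this, hκt]; rfl
        · have hκf : c u = false := by
            rw [← hcv]; exact (h3 v hvW' (G.ne_of_adj huv).symm).mp huv
          refine monoCase W hW fun y hy => ?_
          obtain ⟨nuy, duy⟩ := crossWu y hy
          have : c y = true := by
            cases hcy : c y with
            | true => rfl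
            | false => exact absurd ((h3 y (hWW' y hy) duy.symm).mpr hcy) nuy
          rw [this, hκf]; rfl
      · rw [hxv] at hyp
        rcases hyp with h1 | h2 | h3
        · exact absurd huv.symm (h1 u huW')
        · have hκt : c u = true := (h2 u huW' (G.ne_of_adj huv)).mp huv.symm
          refine monoCase W hW fun y hy => ?_
          obtain ⟨nvy, dvy⟩ := crossWv y hy
          have : c y = false := by
            cases hcy : c y with
            | false => rfl
            | true => exact absurd ((h2 y (hWW' y hy) dvy.symm).mpr hcy) nvy
          rw [this, hκt]; rfl
        · have hκf : c u = false := (h3 u huW' (G.ne_of_adj huv)).mp huv.symm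
          refine monoCase W hW fun y hy => ?_
          obtain ⟨nvy, dvy⟩ := crossWv y hy
          have : c y = true := by
            cases hcy : c y with
            | true => rfl
            | false => exact absurd ((h3 y (hWW' y hy) dvy.symm).mpr hcy) nvy
          rw [this, hκf]; rfl
      · obtain ⟨nux, dux⟩ := crossWu x hxW
        rcases hyp with h1 | h2 | h3
        · exact ⟨x, hxW, Or.inl fun y hy => h1 y (hWW' y hy)⟩
        · have hcu : ¬ (c u = true) := fun hcy =>
            nux ((h2 u huW' dux).mpr hcy).symm
          rw [Bool.not_eq_true] at hcu
          refine ⟨x, hxW, Or.inr fun y hy hyx => ?_⟩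
          rw [hcu]
          simpa using h2 y (hWW' y hy) hyx
        · have hcu : ¬ (c u = false) := fun hcy =>
            nux ((h3 u huW' dux).mpr hcy).symm
          rw [Bool.not_eq_false] at hcu
          refine ⟨x, hxW, Or.inr fun y hy hyx => ?_⟩
          rw [hcu]
          simpa using h3 y (hWW' y hy) hyx
    haveI : Fintype ↥C₁.supp := Fintype.ofFinite _
    apply aux_buildSpecial (G.induce C₁.supp) (fun y => c ↑y == !(c u))
    intro Z hZ
    obtain ⟨z0, hz0⟩ := hZ
    have himg : (Subtype.val '' Z) ⊆ C₁.supp := by rintro _ ⟨y, hy, rfl⟩; exact y.2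
    obtain ⟨x, hxW, hyp⟩ := P _ himg ⟨z0, z0, hz0, rfl⟩
    obtain ⟨x0, hx0, rfl⟩ := hxW
    refine ⟨x0, hx0, ?_⟩
    rcases hyp with h1 | h2
    · exact Or.inl fun y hy hA => h1 ↑y ⟨y, hy, rfl⟩ hA
    · refine Or.inr fun y hy hyx => ?_
      have := h2 ↑y ⟨y, hy, rfl⟩ (fun hcc => hyx (Subtype.ext hcc))
      simpa [beq_iff_eq] using this

/-- If a 2-threshold graph has two (distinct) connected components each containing at
least two vertices, then one of them induces a threshold graph and the other induces a
special 2-threshold graph. -/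
theorem twoThreshold_two_nontrivial_components {V : Type*} [Fintype V]
    (G : SimpleGraph V) (h : Is2Threshold G) (C₁ C₂ : G.ConnectedComponent)
    (hne : C₁ ≠ C₂) (h₁ : C₁.supp.Nontrivial) (h₂ : C₂.supp.Nontrivial) :
    (IsThreshold (G.induce C₁.supp) ∧ IsSpecial2Threshold (G.induce C₂.supp)) ∨
    (IsThreshold (G.induce C₂.supp) ∧ IsSpecial2Threshold (G.induce C₁.supp)) := by
  classical
  obtain ⟨c, hc⟩ := h
  have hc' : TTProp G c := hc
  by_cases hbi : ∃ x ∈ C₂.supp, ∃ y, G.Adj x y ∧ c x ≠ c y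
  · -- then C₁ has no bichromatic edge, so C₁ is monochromatic
    have hnobi : ∀ x ∈ C₁.supp, ∀ y, G.Adj x y → c x = c y := by
      by_contra hcon
      push_neg at hcon
      obtain ⟨a, ha, b, hab, hcol⟩ := hcon
      obtain ⟨a', ha', b', hab', hcol'⟩ := hbi
      have hb : b ∈ C₁.supp := by
        rw [SimpleGraph.ConnectedComponent.mem_supp_iff] at ha ⊢
        rw [← ha]
        exact (SimpleGraph.ConnectedComponent.sound hab.reachable).symm
      have hb' : b' ∈ C₂.supp := by
        rw [SimpleGraph.ConnectedComponent.mem_supp_iff] at ha' ⊢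
        rw [← ha']
        exact (SimpleGraph.ConnectedComponent.sound hab'.reachable).symm
      exact aux_no_two_bi hc' hne ha hb ha' hb' hab hab' hcol hcol'
    exact Or.inl (aux_core hc' (Ne.symm hne) h₁ (aux_mono hnobi))
  · push_neg at hbi
    have hnobi : ∀ x ∈ C₂.supp, ∀ y, G.Adj x y → c x = c y := fun x hx y hxy =>
      hbi x hx y hxy
    exact Or.inr (aux_core hc' hne h₂ (aux_mono hnobi))
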